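/- In the random digraph D_{n,p} on n vertices, in which each of the n(n−1) oriented edges is present independently with probability p, the probability that every vertex is reachable by a directed path from a fixed vertex equals the probability that the random (undirected) graph G_{n,p} is connected. -/

import Mathlib

/-- The probability of an event `A` when each coordinate `e : E` is an
independent Bernoulli(`p`) bit. -/
noncomputable def bernoulliPr {E : Type*} [Fintype E] [DecidableEq E]
    (p : ℝ) (A : Set (E → Bool)) : ℝ :=
  ∑ ω : E → Bool,
    Set.indicator A (fun ω' => ∏ e : E, if ω' e = true then p else 1 - p) ω

/-- Directed reachability in the random digraph encoded by `ω`: there is an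
oriented edge `a → b` iff `a ≠ b` and the bit of `(a, b)` is on. -/
def dreach {n : ℕ} (ω : Fin n × Fin n → Bool) : Fin n → Fin n → Prop :=
  Relation.ReflTransGen (fun a b => a ≠ b ∧ ω (a, b) = true)

/-- The random graph `G_{n,p}` encoded by a configuration of edge-bits. -/
def graphOf {n : ℕ} (η : Sym2 (Fin n) → Bool) : SimpleGraph (Fin n) :=
  SimpleGraph.fromRel fun a b => η s(a, b) = true


open Finset

namespace Stmt5

variable {E E' : Type*} [Fintype E] [DecidableEq E] [Fintype E'] [DecidableEq E']

/-- weight of a configuration -/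
def wt (p : ℝ) (ω : E → Bool) : ℝ := ∏ e : E, if ω e = true then p else 1 - p

lemma bern_eq_sum (p : ℝ) (A : Set (E → Bool)) [DecidablePred (· ∈ A)] :
    bernoulliPr p A = ∑ ω : E → Bool, if ω ∈ A then wt p ω else 0 := by
  unfold bernoulliPr
  refine Finset.sum_congr rfl fun ω _ => ?_
  rw [Set.indicator_apply]
  split <;> rfl

set_option linter.unusedSectionVars false

lemma sum_wt (p : ℝ) : ∑ ω : E → Bool, wt p ω = (1 : ℝ) := by
  have h : ∑ ω : E → Bool, wt p ω
      = ∏ e : E, ∑ b : Bool, (if b = true then p else 1 - p) :=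
    (Fintype.prod_sum (fun (_ : E) (b : Bool) => if b = true then p else 1 - p)).symm
  rw [h]; simp

lemma bern_def (p : ℝ) (A : Set (E → Bool)) :
    bernoulliPr p A = ∑ ω : E → Bool, Set.indicator A (wt p) ω := rfl

lemma bern_empty (p : ℝ) : bernoulliPr p (∅ : Set (E → Bool)) = 0 := by
  unfold bernoulliPr; simp

variable (P : E → Prop) [DecidablePred P]

/-- merge two partial configurations -/
def merge (σ : {e // P e} → Bool) (τ : {e // ¬ P e} → Bool) (e : E) : Bool :=
  if h : P e then σ ⟨e, h⟩ else τ ⟨e, h⟩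

lemma merge_of_pos {σ τ} {e : E} (h : P e) : merge P σ τ e = σ ⟨e, h⟩ := dif_pos h

lemma merge_of_neg {σ τ} {e : E} (h : ¬ P e) : merge P σ τ e = τ ⟨e, h⟩ := dif_neg h

def splitEquiv : (E → Bool) ≃ ({e // P e} → Bool) × ({e // ¬ P e} → Bool) where
  toFun ω := (fun s => ω s.1, fun t => ω t.1)
  invFun στ := merge P στ.1 στ.2
  left_inv ω := by
    funext e
    by_cases h : P e
    · exact merge_of_pos P h
    · exact merge_of_neg P h
  right_inv στ := by
    ext s
    · exact merge_of_pos P s.2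
    · exact merge_of_neg P s.2

lemma sum_split (F : (E → Bool) → ℝ) :
    ∑ ω : E → Bool, F ω =
      ∑ σ : {e // P e} → Bool, ∑ τ : {e // ¬ P e} → Bool, F (merge P σ τ) := by
  calc ∑ ω : E → Bool, F ω
      = ∑ q : ({e // P e} → Bool) × ({e // ¬ P e} → Bool), F ((splitEquiv P).symm q) :=
        ((splitEquiv P).symm.sum_comp F).symm
    _ = ∑ σ : {e // P e} → Bool, ∑ τ : {e // ¬ P e} → Bool, F (merge P σ τ) :=
        Fintype.sum_prod_type _

lemma wt_merge (p : ℝ) (σ : {e // P e} → Bool) (τ : {e // ¬ P e} → Bool) :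
    wt p (merge P σ τ) = wt p σ * wt p τ := by
  unfold wt
  rw [← (Equiv.sumCompl P).prod_comp (fun e => if merge P σ τ e = true then p else 1 - p),
    Fintype.prod_sum_type]
  congr 1
  · exact Finset.prod_congr rfl fun s _ => by
      simp [Equiv.sumCompl, merge_of_pos P s.2]
  · exact Finset.prod_congr rfl fun t _ => by
      simp [Equiv.sumCompl, merge_of_neg P t.2]





set_option linter.unusedSectionVars false

/-- `A` depends only on coordinates satisfying `P`. -/
def DepOn (A : Set (E → Bool)) (P : E → Prop) : Prop :=
  ∀ ω ω' : E → Bool, (∀ e, P e → ω e = ω' e) → (ω ∈ A ↔ ω' ∈ A)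

lemma DepOn.mono {A : Set (E → Bool)} {P Q : E → Prop} (h : DepOn A P)
    (hPQ : ∀ e, P e → Q e) : DepOn A Q :=
  fun ω ω' hag => h ω ω' fun e he => hag e (hPQ e he)

variable (P : E → Prop) [DecidablePred P]

/-- marginal indicator for the `P`-coordinates -/
noncomputable def chi (A : Set (E → Bool)) (σ : {e // P e} → Bool) : ℝ :=
  by classical exact if merge P σ (fun _ => false) ∈ A then 1 else 0

/-- marginal indicator for the `¬P`-coordinates -/
noncomputable def chi' (A : Set (E → Bool)) (τ : {e // ¬ P e} → Bool) : ℝ :=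
  by classical exact if merge P (fun _ => false) τ ∈ A then 1 else 0

lemma indicator_merge_left {A : Set (E → Bool)} (hA : DepOn A P)
    (σ : {e // P e} → Bool) (τ : {e // ¬ P e} → Bool) :
    Set.indicator A (wt p) (merge P σ τ) = chi P A σ * wt p (merge P σ τ) := by
  classical
  have hmem : merge P σ τ ∈ A ↔ merge P σ (fun _ => false) ∈ A := by
    refine hA _ _ fun e he => ?_
    rw [merge_of_pos P he, merge_of_pos P he]
  rw [Set.indicator_apply, chi]
  by_cases h : merge P σ τ ∈ A
  · rw [if_pos h, if_pos (hmem.mp h), one_mul]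
  · rw [if_neg h, if_neg (fun hc => h (hmem.mpr hc)), zero_mul]

lemma indicator_merge_right {A : Set (E → Bool)} (hA : DepOn A fun e => ¬ P e)
    (σ : {e // P e} → Bool) (τ : {e // ¬ P e} → Bool) :
    Set.indicator A (wt p) (merge P σ τ) = chi' P A τ * wt p (merge P σ τ) := by
  classical
  have hmem : merge P σ τ ∈ A ↔ merge P (fun _ => false) τ ∈ A := by
    refine hA _ _ fun e he => ?_
    rw [merge_of_neg P he, merge_of_neg P he]
  rw [Set.indicator_apply, chi']
  by_cases h : merge P σ τ ∈ A
  · rw [if_pos h, if_pos (hmem.mp h), one_mul]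
  · rw [if_neg h, if_neg (fun hc => h (hmem.mpr hc)), zero_mul]

lemma bern_eq_chi {A : Set (E → Bool)} (hA : DepOn A P) (p : ℝ) :
    bernoulliPr p A = ∑ σ : {e // P e} → Bool, chi P A σ * wt p σ := by
  classical
  rw [bern_def, sum_split P]
  have h : ∀ σ τ, Set.indicator A (wt p) (merge P σ τ)
      = (chi P A σ * wt p σ) * wt p τ := by
    intro σ τ
    rw [indicator_merge_left P hA, wt_merge]; ring
  calc ∑ σ, ∑ τ, Set.indicator A (wt p) (merge P σ τ)
      = ∑ σ, ∑ τ, (chi P A σ * wt p σ) * wt p τ := by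
        exact Finset.sum_congr rfl fun σ _ => Finset.sum_congr rfl fun τ _ => h σ τ
    _ = ∑ σ, (chi P A σ * wt p σ) * (∑ τ : {e // ¬ P e} → Bool, wt p τ) :=
        Finset.sum_congr rfl fun σ _ => (Finset.mul_sum _ _ _).symm
    _ = ∑ σ, chi P A σ * wt p σ := by rw [sum_wt]; simp

lemma bern_eq_chi' {B : Set (E → Bool)} (hB : DepOn B fun e => ¬ P e) (p : ℝ) :
    bernoulliPr p B = ∑ τ : {e // ¬ P e} → Bool, chi' P B τ * wt p τ := by
  classical
  rw [bern_def, sum_split P]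
  have h : ∀ σ τ, Set.indicator B (wt p) (merge P σ τ)
      = wt p σ * (chi' P B τ * wt p τ) := by
    intro σ τ
    rw [indicator_merge_right P hB, wt_merge]; ring
  calc ∑ σ, ∑ τ, Set.indicator B (wt p) (merge P σ τ)
      = ∑ σ, ∑ τ, wt p σ * (chi' P B τ * wt p τ) := by
        exact Finset.sum_congr rfl fun σ _ => Finset.sum_congr rfl fun τ _ => h σ τ
    _ = (∑ σ : {e // P e} → Bool, wt p σ) * (∑ τ, chi' P B τ * wt p τ) := by
        rw [Finset.sum_mul]
        exact Finset.sum_congr rfl fun σ _ => (Finset.mul_sum _ _ _).symm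
    _ = ∑ τ, chi' P B τ * wt p τ := by rw [sum_wt, one_mul]



/-- Independence of events depending on disjoint coordinate sets. -/
lemma bern_inter (p : ℝ) {A B : Set (E → Bool)}
    (hA : DepOn A P) (hB : DepOn B fun e => ¬ P e) :
    bernoulliPr p (A ∩ B) = bernoulliPr p A * bernoulliPr p B := by
  classical
  rw [bern_def, sum_split P]
  have key : ∀ σ τ, Set.indicator (A ∩ B) (wt p) (merge P σ τ)
      = (chi P A σ * wt p σ) * (chi' P B τ * wt p τ) := by
    intro σ τ
    have h1 : Set.indicator (A ∩ B) (wt p) (merge P σ τ)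
        = chi P A σ * (chi' P B τ * wt p (merge P σ τ)) := by
      rw [Set.indicator_apply]
      by_cases hmA : merge P σ τ ∈ A
      · by_cases hmB : merge P σ τ ∈ B
        · rw [if_pos ⟨hmA, hmB⟩]
          have := indicator_merge_right P (p := p) hB σ τ
          rw [Set.indicator_apply, if_pos hmB] at this
          rw [← this]
          have h2 : chi P A σ = 1 := by
            rw [chi, if_pos]
            exact (hA _ _ fun e he => by
              rw [merge_of_pos P he, merge_of_pos P he]).mp hmA
          rw [h2, one_mul]
        · rw [if_neg (fun hc => hmB hc.2)]
          have h2 : chi' P B τ = 0 := by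
            rw [chi', if_neg]
            intro hc
            exact hmB ((hB _ _ fun e he => by
              rw [merge_of_neg P he, merge_of_neg P he]).mp hc)
          rw [h2]; ring
      · rw [if_neg (fun hc => hmA hc.1)]
        have h2 : chi P A σ = 0 := by
          rw [chi, if_neg]
          intro hc
          exact hmA ((hA _ _ fun e he => by
            rw [merge_of_pos P he, merge_of_pos P he]).mp hc)
        rw [h2]; ring
    rw [h1, wt_merge]; ring
  calc ∑ σ, ∑ τ, Set.indicator (A ∩ B) (wt p) (merge P σ τ)
      = ∑ σ, ∑ τ, (chi P A σ * wt p σ) * (chi' P B τ * wt p τ) := by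
        exact Finset.sum_congr rfl fun σ _ => Finset.sum_congr rfl fun τ _ => key σ τ
    _ = (∑ σ, chi P A σ * wt p σ) * (∑ τ, chi' P B τ * wt p τ) := by
        rw [Finset.sum_mul]
        exact Finset.sum_congr rfl fun σ _ => (Finset.mul_sum _ _ _).symm
    _ = bernoulliPr p A * bernoulliPr p B := by
        rw [bern_eq_chi P hA, bern_eq_chi' P hB]



/-- Relabeling coordinates preserves the Bernoulli probability. -/
lemma bern_comp (p : ℝ) (ε : E ≃ E') (A : Set (E' → Bool)) :
    bernoulliPr p {ω : E → Bool | (fun x => ω (ε.symm x)) ∈ A} = bernoulliPr p A := by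
  classical
  rw [bern_def, bern_def]
  refine Fintype.sum_equiv (ε.arrowCongr (Equiv.refl Bool)) _ _ fun ω => ?_
  have hmem : (fun x => ω (ε.symm x)) = ε.arrowCongr (Equiv.refl Bool) ω := rfl
  have hwt : wt p ω = wt p (ε.arrowCongr (Equiv.refl Bool) ω) := by
    unfold wt
    refine Fintype.prod_equiv ε _ _ fun e => ?_
    simp [Equiv.arrowCongr]
  rw [Set.indicator_apply, Set.indicator_apply]
  simp only [Set.mem_setOf_eq, hmem, hwt]

/-- Marginalization: an event depending only on the `P`-coordinates. -/
lemma bern_marginal (p : ℝ) (A : Set ({e // P e} → Bool)) :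
    bernoulliPr p {ω : E → Bool | (fun s => ω s.1) ∈ A} = bernoulliPr p A := by
  classical
  rw [bern_def, bern_def, sum_split P]
  have h : ∀ σ τ, Set.indicator {ω : E → Bool | (fun s => ω s.1) ∈ A} (wt p) (merge P σ τ)
      = Set.indicator A (wt p) σ * wt p τ := by
    intro σ τ
    have hres : (fun s : {e // P e} => merge P σ τ s.1) = σ := by
      funext s
      rw [merge_of_pos P s.2]
    rw [Set.indicator_apply, Set.indicator_apply, wt_merge]
    simp only [Set.mem_setOf_eq, hres]
    split <;> simp
  calc ∑ σ, ∑ τ, Set.indicator {ω : E → Bool | (fun s => ω s.1) ∈ A} (wt p) (merge P σ τ)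
      = ∑ σ, ∑ τ, Set.indicator A (wt p) σ * wt p τ := by
        exact Finset.sum_congr rfl fun σ _ => Finset.sum_congr rfl fun τ _ => h σ τ
    _ = ∑ σ, Set.indicator A (wt p) σ * (∑ τ : {e // ¬ P e} → Bool, wt p τ) :=
        Finset.sum_congr rfl fun σ _ => (Finset.mul_sum _ _ _).symm
    _ = ∑ σ, Set.indicator A (wt p) σ := by rw [sum_wt]; simp

/-- Combined marginalization and relabeling. -/
lemma bern_restrict (p : ℝ) (ε : {e // P e} ≃ E') (A : Set (E' → Bool)) :
    bernoulliPr p {ω : E → Bool | (fun x => ω (ε.symm x).1) ∈ A} = bernoulliPr p A := by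
  have h1 := bern_marginal P p {σ : {e // P e} → Bool | (fun x => σ (ε.symm x)) ∈ A}
  have h2 := bern_comp p ε A
  rw [← h2, ← h1]
  rfl

/-- The probability that all `P`-coordinates are off. -/
lemma bern_allFalse (p : ℝ) :
    bernoulliPr p {ω : E → Bool | ∀ e, P e → ω e = false}
      = (1 - p) ^ Fintype.card {e // P e} := by
  classical
  have hset : {ω : E → Bool | ∀ e, P e → ω e = false}
      = {ω : E → Bool | (fun s : {e // P e} => ω s.1) ∈
          ({σ | ∀ s, σ s = false} : Set ({e // P e} → Bool))} := by
    ext ω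
    simp only [Set.mem_setOf_eq]
    constructor
    · intro h s; exact h s.1 s.2
    · intro h e he; exact h ⟨e, he⟩
  rw [hset, bern_marginal P p]
  have hsingle : ({σ | ∀ s, σ s = false} : Set ({e // P e} → Bool))
      = {fun _ => false} := by
    ext σ
    simp only [Set.mem_setOf_eq, Set.mem_singleton_iff]
    constructor
    · intro h; funext s; exact h s
    · intro h s; rw [h]
  rw [bern_def, hsingle]
  rw [Finset.sum_eq_single (fun _ => false)]
  · rw [Set.indicator_of_mem (Set.mem_singleton _)]
    unfold wt
    simp [Finset.prod_const, Finset.card_univ]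
  · intro σ _ hσ
    exact Set.indicator_of_notMem (by simpa using hσ) _
  · intro h; exact absurd (Finset.mem_univ _) h

end Stmt5

namespace Stmt5

open Finset Relation

set_option linter.unusedSectionVars false

section Generic

variable {E : Type*} [Fintype E] [DecidableEq E]

/-- Partition of the space according to a classifying function. -/
lemma bern_partition (p : ℝ) {α : Type*} [Fintype α] [DecidableEq α]
    (cls : (E → Bool) → α) :
    ∑ a : α, bernoulliPr p {ω : E → Bool | cls ω = a} = 1 := by
  classical
  simp only [bern_def]
  rw [Finset.sum_comm, ← sum_wt (E := E) p]
  refine Finset.sum_congr rfl fun ω _ => ?_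
  rw [Finset.sum_eq_single (cls ω)]
  · exact Set.indicator_of_mem (show ω ∈ {ω' | cls ω' = cls ω} from rfl) (wt p)
  · intro a _ ha
    exact Set.indicator_of_notMem
      (show ω ∉ {ω' | cls ω' = a} from fun h => ha (Eq.symm h)) (wt p)
  · intro h; exact absurd (Finset.mem_univ _) h

/-- Transport of `ReflTransGen` along an equivalence. -/
lemma rtg_congr {V V' : Type*} (φ : V ≃ V') {r : V → V → Prop} {r' : V' → V' → Prop}
    (h : ∀ a b, r a b ↔ r' (φ a) (φ b)) (a b : V) :
    ReflTransGen r a b ↔ ReflTransGen r' (φ a) (φ b) := by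
  constructor
  · intro hr
    exact hr.lift φ fun x y hxy => (h x y).mp hxy
  · intro hr
    have h2 := hr.lift φ.symm fun x y hxy =>
      (h (φ.symm x) (φ.symm y)).mpr (by simpa using hxy)
    simpa [Function.onFun] using h2

end Generic

/-- generic directed reachability -/
def dR {V : Type*} (ω : V × V → Bool) : V → V → Prop :=
  ReflTransGen (fun a b => a ≠ b ∧ ω (a, b) = true)

/-- Probability that every vertex is reachable from `0` in `D_{m+1,p}`. -/
noncomputable def Rf (p : ℝ) (m : ℕ) : ℝ :=
  bernoulliPr p {ω : Fin (m+1) × Fin (m+1) → Bool | ∀ u, dR ω 0 u}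

/-- Probability that `G_{m+1,p}` is connected. -/
noncomputable def Cf (p : ℝ) (m : ℕ) : ℝ :=
  bernoulliPr p {η : Sym2 (Fin (m+1)) → Bool | (graphOf η).Connected}

/-- Relabeling vertices preserves the all-reachable probability. -/
lemma bern_reach_relabel {V V' : Type*} [Fintype V] [DecidableEq V]
    [Fintype V'] [DecidableEq V'] (p : ℝ) (φ : V ≃ V') (v : V) :
    bernoulliPr p {ω : V × V → Bool | ∀ u, dR ω v u}
      = bernoulliPr p {ω' : V' × V' → Bool | ∀ u', dR ω' (φ v) u'} := by
  rw [← bern_comp p (φ.prodCongr φ) {ω' : V' × V' → Bool | ∀ u', dR ω' (φ v) u'}]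
  congr 1
  ext ω
  simp only [Set.mem_setOf_eq]
  have key : ∀ u : V, dR ω v u ↔
      dR (fun x : V' × V' => ω ((φ.prodCongr φ).symm x)) (φ v) (φ u) := by
    intro u
    refine rtg_congr φ (fun a b => ?_) v u
    constructor
    · rintro ⟨hne, hω⟩
      refine ⟨fun h => hne (φ.injective h), ?_⟩
      simpa using hω
    · rintro ⟨hne, hω⟩
      refine ⟨fun h => hne (congrArg φ h), ?_⟩
      simpa using hω
  constructor
  · intro h u'
    have := (key (φ.symm u')).mp (h _)
    simpa using this
  · intro h u
    exact (key u).mpr (h (φ u))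

section DRec

variable {n : ℕ} (v : Fin n) (S : Finset (Fin n))

/-- restricted directed reachability within `S` -/
def rS (ω : Fin n × Fin n → Bool) (a b : Fin n) : Prop :=
  (a ∈ S ∧ b ∈ S) ∧ (a ≠ b ∧ ω (a, b) = true)

lemma ES_eq (hv : v ∈ S) :
    {ω : Fin n × Fin n → Bool | ∀ u, dreach ω v u ↔ u ∈ S}
      = {ω | ∀ u ∈ S, ReflTransGen (rS S ω) v u}
        ∩ {ω | ∀ e : Fin n × Fin n, e.1 ∈ S ∧ e.2 ∉ S → ω e = false} := by
  ext ω
  simp only [Set.mem_setOf_eq, Set.mem_inter_iff]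
  constructor
  · intro hES
    refine ⟨fun u hu => ?_, fun e he => ?_⟩
    · -- strengthen reachability to stay in S
      have main : ∀ u, dreach ω v u → ReflTransGen (rS S ω) v u := by
        intro u hr
        induction hr with
        | refl => exact ReflTransGen.refl
        | tail h step ih =>
          exact ih.tail ⟨⟨(hES _).mp h, (hES _).mp (h.tail step)⟩, step⟩
      exact main u ((hES u).mpr hu)
    · obtain ⟨ha, hb⟩ := he
      by_contra hne
      have hω : ω e = true := by
        cases hh : ω e
        · exact absurd hh hne
        · rfl
      have hab : e.1 ≠ e.2 := fun h => hb (h ▸ ha)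
      have : dreach ω v e.2 := ((hES e.1).mpr ha).tail ⟨hab, by rwa [Prod.mk.eta]⟩
      exact hb ((hES e.2).mp this)
  · rintro ⟨hA, hB⟩ u
    constructor
    · intro hr
      induction hr with
      | refl => exact hv
      | tail h step ih =>
        rename_i b c
        by_contra hc
        have h1 := hB (b, c) ⟨ih, hc⟩
        have h2 := step.2
        rw [h1] at h2
        exact Bool.false_ne_true h2
    · intro hu
      exact ReflTransGen.mono (fun a b hab => hab.2) _ _ (hA u hu)

lemma ES_empty (hv : v ∉ S) :
    {ω : Fin n × Fin n → Bool | ∀ u, dreach ω v u ↔ u ∈ S} = ∅ := by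
  ext ω
  simp only [Set.mem_setOf_eq, Set.mem_empty_iff_false, iff_false, not_forall]
  exact ⟨v, by simp [hv, dreach, ReflTransGen.refl]⟩

lemma AS_depOn :
    DepOn {ω : Fin n × Fin n → Bool | ∀ u ∈ S, ReflTransGen (rS S ω) v u}
      (fun e => e.1 ∈ S ∧ e.2 ∈ S) := by
  intro ω ω' hag
  have hrel : rS S ω = rS S ω' := by
    funext a b
    refine propext ?_
    unfold rS
    constructor
    · rintro ⟨hm, hne, hω⟩
      exact ⟨hm, hne, by rw [← hag (a, b) hm]; exact hω⟩
    · rintro ⟨hm, hne, hω⟩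
      exact ⟨hm, hne, by rw [hag (a, b) hm]; exact hω⟩
  simp only [Set.mem_setOf_eq, hrel]

lemma BS_depOn :
    DepOn {ω : Fin n × Fin n → Bool | ∀ e : Fin n × Fin n, e.1 ∈ S ∧ e.2 ∉ S → ω e = false}
      (fun e => ¬ (e.1 ∈ S ∧ e.2 ∈ S)) := by
  intro ω ω' hag
  simp only [Set.mem_setOf_eq]
  constructor
  · intro h e he
    rw [← hag e (fun hc => he.2 hc.2)]
    exact h e he
  · intro h e he
    rw [hag e (fun hc => he.2 hc.2)]
    exact h e he

lemma card_cross :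
    Fintype.card {e : Fin n × Fin n // e.1 ∈ S ∧ e.2 ∉ S} = S.card * (n - S.card) := by
  classical
  rw [Fintype.card_subtype]
  have : Finset.filter (fun e : Fin n × Fin n => e.1 ∈ S ∧ e.2 ∉ S) univ = S ×ˢ Sᶜ := by
    ext e
    simp [Finset.mem_product]
  rw [this, Finset.card_product, Finset.card_compl, Fintype.card_fin]

lemma bern_BS (p : ℝ) :
    bernoulliPr p
      {ω : Fin n × Fin n → Bool | ∀ e : Fin n × Fin n, e.1 ∈ S ∧ e.2 ∉ S → ω e = false}
      = (1 - p) ^ (S.card * (n - S.card)) := by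
  classical
  rw [← card_cross S]
  exact bern_allFalse (fun e : Fin n × Fin n => e.1 ∈ S ∧ e.2 ∉ S) p

end DRec

lemma bern_AS (p : ℝ) {n : ℕ} (v : Fin n) (S : Finset (Fin n)) (hv : v ∈ S)
    {c : ℕ} (hc : Fintype.card {a : Fin n // a ∈ S} = c + 1) :
    bernoulliPr p {ω : Fin n × Fin n → Bool | ∀ u ∈ S, ReflTransGen (rS S ω) v u}
      = Rf p c := by
  classical
  set eS : {a : Fin n // a ∈ S} ≃ Fin (c + 1) := Fintype.equivFinOfCardEq hc with heS
  set ε : {e : Fin n × Fin n // e.1 ∈ S ∧ e.2 ∈ S} ≃ Fin (c + 1) × Fin (c + 1) :=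
    (Equiv.subtypeProdEquivProd).trans (eS.prodCongr eS) with hε
  have hεsymm : ∀ x : Fin (c + 1) × Fin (c + 1),
      (ε.symm x).1 = ((eS.symm x.1).1, (eS.symm x.2).1) := fun x => rfl
  have hset : {ω : Fin n × Fin n → Bool | ∀ u ∈ S, ReflTransGen (rS S ω) v u}
      = {ω | (fun x => ω (ε.symm x).1) ∈
          {θ : Fin (c + 1) × Fin (c + 1) → Bool | ∀ u', dR θ (eS ⟨v, hv⟩) u'}} := by
    ext ω
    simp only [Set.mem_setOf_eq]
    set θ : Fin (c + 1) × Fin (c + 1) → Bool := fun x => ω (ε.symm x).1 with hθ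
    set rsub : {a : Fin n // a ∈ S} → {a : Fin n // a ∈ S} → Prop :=
      fun x y => x ≠ y ∧ ω (x.1, y.1) = true with hrsub
    have stepA : ∀ u (hu : u ∈ S),
        ReflTransGen (rS S ω) v u ↔ ReflTransGen rsub ⟨v, hv⟩ ⟨u, hu⟩ := by
      intro u hu
      constructor
      · intro hr
        have aux : ∀ w, ReflTransGen (rS S ω) v w →
            ∀ hw : w ∈ S, ReflTransGen rsub ⟨v, hv⟩ ⟨w, hw⟩ := by
          intro w hr2
          induction hr2 with
          | refl => intro hw; exact ReflTransGen.refl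
          | tail h step ih =>
            intro hw
            exact (ih step.1.1).tail
              ⟨fun hxy => step.2.1 (congrArg Subtype.val hxy), step.2.2⟩
        exact aux u hr hu
      · intro hr
        exact hr.lift Subtype.val fun x y hxy =>
          ⟨⟨x.2, y.2⟩, fun h => hxy.1 (Subtype.ext h), hxy.2⟩
    have stepB : ∀ (x y : {a : Fin n // a ∈ S}),
        ReflTransGen rsub x y ↔
          ReflTransGen (fun a b => a ≠ b ∧ θ (a, b) = true) (eS x) (eS y) := by
      intro x y
      refine rtg_congr eS (fun a b => ?_) x y
      have hθab : θ (eS a, eS b) = ω (a.1, b.1) := by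
        rw [hθ]
        show ω (ε.symm (eS a, eS b)).1 = ω (a.1, b.1)
        rw [hεsymm]
        simp
      constructor
      · rintro ⟨hne, hω⟩
        exact ⟨fun h => hne (eS.injective h), by rw [hθab]; exact hω⟩
      · rintro ⟨hne, hω⟩
        exact ⟨fun h => hne (congrArg eS h), by rw [hθab] at hω; exact hω⟩
    constructor
    · intro h u'
      have hu : (eS.symm u').1 ∈ S := (eS.symm u').2
      have h1 := (stepA _ hu).mp (h _ hu)
      have h2 := (stepB ⟨v, hv⟩ (eS.symm u')).mp h1
      rw [eS.apply_symm_apply] at h2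
      exact h2
    · intro h u hu
      refine (stepA u hu).mpr ?_
      refine (stepB ⟨v, hv⟩ ⟨u, hu⟩).mpr ?_
      exact h (eS ⟨u, hu⟩)
  rw [hset, bern_restrict _ p ε]
  have hrel := bern_reach_relabel p (Equiv.swap (eS ⟨v, hv⟩) (0 : Fin (c + 1))) (eS ⟨v, hv⟩)
  rw [Equiv.swap_apply_left] at hrel
  rw [Rf]
  exact hrel

lemma bern_ES_term (p : ℝ) {n : ℕ} (v : Fin n) (S : Finset (Fin n)) (hv : v ∈ S) :
    bernoulliPr p {ω : Fin n × Fin n → Bool | ∀ u, dreach ω v u ↔ u ∈ S}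
      = Rf p (S.card - 1) * (1 - p) ^ (S.card * (n - S.card)) := by
  classical
  have hpos : 1 ≤ S.card := Finset.card_pos.mpr ⟨v, hv⟩
  have hc : Fintype.card {a : Fin n // a ∈ S} = (S.card - 1) + 1 := by
    rw [Fintype.card_coe]
    omega
  rw [ES_eq v S hv,
    bern_inter (fun e : Fin n × Fin n => e.1 ∈ S ∧ e.2 ∈ S) p
      (AS_depOn v S) (BS_depOn S),
    bern_AS p v S hv hc, bern_BS S p]

lemma rec_R (p : ℝ) (n : ℕ) (v : Fin n) :
    ∑ S ∈ Finset.univ.filter (fun S : Finset (Fin n) => v ∈ S),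
      Rf p (S.card - 1) * (1 - p) ^ (S.card * (n - S.card)) = 1 := by
  classical
  have hpart := bern_partition (E := Fin n × Fin n) p
    (fun ω => Finset.univ.filter (fun u => dreach ω v u))
  have hset : ∀ S : Finset (Fin n),
      {ω : Fin n × Fin n → Bool | (Finset.univ.filter fun u => dreach ω v u) = S}
        = {ω | ∀ u, dreach ω v u ↔ u ∈ S} := by
    intro S
    ext ω
    simp [Finset.ext_iff]
  calc ∑ S ∈ Finset.univ.filter (fun S : Finset (Fin n) => v ∈ S),
        Rf p (S.card - 1) * (1 - p) ^ (S.card * (n - S.card))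
      = ∑ S ∈ Finset.univ.filter (fun S : Finset (Fin n) => v ∈ S),
          bernoulliPr p {ω : Fin n × Fin n → Bool | ∀ u, dreach ω v u ↔ u ∈ S} := by
        refine Finset.sum_congr rfl fun S hS => ?_
        rw [bern_ES_term p v S (Finset.mem_filter.mp hS).2]
    _ = ∑ S : Finset (Fin n),
          bernoulliPr p {ω : Fin n × Fin n → Bool | ∀ u, dreach ω v u ↔ u ∈ S} := by
        refine Finset.sum_subset (Finset.filter_subset _ _) fun S _ hS => ?_
        have hv : v ∉ S := by
          intro hc
          exact hS (Finset.mem_filter.mpr ⟨Finset.mem_univ _, hc⟩)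
        rw [ES_empty v S hv, bern_empty]
    _ = 1 := by
        rw [← hpart]
        exact Finset.sum_congr rfl fun S _ => by rw [hset S]

end Stmt5

namespace Stmt5

open Finset Relation

set_option linter.unusedSectionVars false

/-- Sym2 congruence from an equivalence. -/
def sym2Congr {α β : Type*} (e : α ≃ β) : Sym2 α ≃ Sym2 β where
  toFun := Sym2.map e
  invFun := Sym2.map e.symm
  left_inv z := by
    induction z using Sym2.ind with
    | _ x y => simp [Sym2.map_pair_eq]
  right_inv z := by
    induction z using Sym2.ind with
    | _ x y => simp [Sym2.map_pair_eq]

lemma graphOf_adj {n : ℕ} (η : Sym2 (Fin n) → Bool) (a b : Fin n) :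
    (graphOf η).Adj a b ↔ a ≠ b ∧ η s(a, b) = true := by
  rw [graphOf, SimpleGraph.fromRel_adj]
  constructor
  · rintro ⟨hne, h | h⟩
    · exact ⟨hne, h⟩
    · exact ⟨hne, by rwa [Sym2.eq_swap]⟩
  · rintro ⟨hne, h⟩
    exact ⟨hne, Or.inl h⟩

lemma connected_iff_reach {n : ℕ} (v : Fin n) (η : Sym2 (Fin n) → Bool) :
    (graphOf η).Connected ↔
      ∀ u, ReflTransGen (fun a b => a ≠ b ∧ η s(a, b) = true) v u := by
  have hR : ∀ x y : Fin n, (graphOf η).Reachable x y ↔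
      ReflTransGen (fun a b => a ≠ b ∧ η s(a, b) = true) x y := by
    intro x y
    rw [SimpleGraph.reachable_iff_reflTransGen]
    constructor
    · intro h
      exact ReflTransGen.mono (fun a b hab => (graphOf_adj η a b).mp hab) _ _ h
    · intro h
      exact ReflTransGen.mono (fun a b hab => (graphOf_adj η a b).mpr hab) _ _ h
  constructor
  · intro h u
    exact (hR v u).mp (h.preconnected v u)
  · intro h
    haveI : Nonempty (Fin n) := ⟨v⟩
    exact SimpleGraph.Connected.mk
      fun x y => ((hR v x).mpr (h x)).symm.trans ((hR v y).mpr (h y))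

section CRec

variable {n : ℕ} (v : Fin n) (T : Finset (Fin n))

/-- restricted undirected reachability within `T` -/
def rT (η : Sym2 (Fin n) → Bool) (a b : Fin n) : Prop :=
  (a ∈ T ∧ b ∈ T) ∧ (a ≠ b ∧ η s(a, b) = true)

lemma ET_eq (hv : v ∈ T) :
    {η : Sym2 (Fin n) → Bool |
        ∀ u, ReflTransGen (fun a b => a ≠ b ∧ η s(a, b) = true) v u ↔ u ∈ T}
      = {η | ∀ u ∈ T, ReflTransGen (rT T η) v u}
        ∩ {η | ∀ a b : Fin n, a ∈ T → b ∉ T → η s(a, b) = false} := by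
  ext η
  simp only [Set.mem_setOf_eq, Set.mem_inter_iff]
  constructor
  · intro hET
    refine ⟨fun u hu => ?_, fun a b ha hb => ?_⟩
    · have main : ∀ u, ReflTransGen (fun a b => a ≠ b ∧ η s(a, b) = true) v u →
          ReflTransGen (rT T η) v u := by
        intro u hr
        induction hr with
        | refl => exact ReflTransGen.refl
        | tail h step ih =>
          exact ih.tail ⟨⟨(hET _).mp h, (hET _).mp (h.tail step)⟩, step⟩
      exact main u ((hET u).mpr hu)
    · by_contra hne
      have hω : η s(a, b) = true := by
        cases hh : η s(a, b)
        · exact absurd hh hne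
        · rfl
      have hab : a ≠ b := fun h => hb (h ▸ ha)
      have : ReflTransGen (fun a b => a ≠ b ∧ η s(a, b) = true) v b :=
        ((hET a).mpr ha).tail ⟨hab, hω⟩
      exact hb ((hET b).mp this)
  · rintro ⟨hA, hB⟩ u
    constructor
    · intro hr
      induction hr with
      | refl => exact hv
      | tail h step ih =>
        rename_i b c
        by_contra hc
        have h1 := hB b c ih hc
        have h2 := step.2
        rw [h1] at h2
        exact Bool.false_ne_true h2
    · intro hu
      exact ReflTransGen.mono (fun a b hab => hab.2) _ _ (hA u hu)

lemma ET_empty (hv : v ∉ T) :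
    {η : Sym2 (Fin n) → Bool |
        ∀ u, ReflTransGen (fun a b => a ≠ b ∧ η s(a, b) = true) v u ↔ u ∈ T} = ∅ := by
  ext η
  simp only [Set.mem_setOf_eq, Set.mem_empty_iff_false, iff_false, not_forall]
  exact ⟨v, by simp [hv, ReflTransGen.refl]⟩

lemma AT_depOn :
    DepOn {η : Sym2 (Fin n) → Bool | ∀ u ∈ T, ReflTransGen (rT T η) v u}
      (fun q => ∀ x ∈ q, x ∈ T) := by
  intro η η' hag
  have hrel : rT T η = rT T η' := by
    funext a b
    refine propext ?_
    unfold rT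
    have hq : (a ∈ T ∧ b ∈ T) → η s(a, b) = η' s(a, b) := by
      intro hm
      refine hag s(a, b) fun x hx => ?_
      rcases Sym2.mem_iff.mp hx with rfl | rfl
      · exact hm.1
      · exact hm.2
    constructor
    · rintro ⟨hm, hne, hη⟩
      exact ⟨hm, hne, by rw [← hq hm]; exact hη⟩
    · rintro ⟨hm, hne, hη⟩
      exact ⟨hm, hne, by rw [hq hm]; exact hη⟩
  simp only [Set.mem_setOf_eq, hrel]

lemma BT_depOn :
    DepOn {η : Sym2 (Fin n) → Bool | ∀ a b : Fin n, a ∈ T → b ∉ T → η s(a, b) = false}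
      (fun q => ¬ ∀ x ∈ q, x ∈ T) := by
  intro η η' hag
  have key : ∀ a b : Fin n, a ∈ T → b ∉ T → η s(a, b) = η' s(a, b) := by
    intro a b ha hb
    refine hag s(a, b) fun hall => hb (hall b (Sym2.mem_mk_right a b))
  simp only [Set.mem_setOf_eq]
  constructor
  · intro h a b ha hb
    rw [← key a b ha hb]
    exact h a b ha hb
  · intro h a b ha hb
    rw [key a b ha hb]
    exact h a b ha hb

lemma card_cross_sym :
    Fintype.card {q : Sym2 (Fin n) // ∃ a b : Fin n, a ∈ T ∧ b ∉ T ∧ q = s(a, b)}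
      = T.card * (n - T.card) := by
  classical
  have hf : Function.Bijective
      (fun e : {e : Fin n × Fin n // e.1 ∈ T ∧ e.2 ∉ T} =>
        (⟨s(e.1.1, e.1.2), e.1.1, e.1.2, e.2.1, e.2.2, rfl⟩ :
          {q : Sym2 (Fin n) // ∃ a b : Fin n, a ∈ T ∧ b ∉ T ∧ q = s(a, b)})) := by
    constructor
    · rintro ⟨⟨a, b⟩, ha, hb⟩ ⟨⟨a', b'⟩, ha', hb'⟩ h
      have h2 : s(a, b) = s(a', b') := Subtype.ext_iff.mp h
      rcases Sym2.eq_iff.mp h2 with ⟨rfl, rfl⟩ | ⟨rfl, rfl⟩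
      · rfl
      · exact absurd ha hb'
    · rintro ⟨q, a, b, ha, hb, rfl⟩
      exact ⟨⟨(a, b), ha, hb⟩, rfl⟩
  rw [← Fintype.card_of_bijective hf]
  exact card_cross T

lemma bern_BT (p : ℝ) :
    bernoulliPr p
      {η : Sym2 (Fin n) → Bool | ∀ a b : Fin n, a ∈ T → b ∉ T → η s(a, b) = false}
      = (1 - p) ^ (T.card * (n - T.card)) := by
  classical
  have hset : {η : Sym2 (Fin n) → Bool | ∀ a b : Fin n, a ∈ T → b ∉ T → η s(a, b) = false}
      = {η | ∀ q, (∃ a b : Fin n, a ∈ T ∧ b ∉ T ∧ q = s(a, b)) → η q = false} := by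
    ext η
    simp only [Set.mem_setOf_eq]
    constructor
    · rintro h q ⟨a, b, ha, hb, rfl⟩
      exact h a b ha hb
    · intro h a b ha hb
      exact h s(a, b) ⟨a, b, ha, hb, rfl⟩
  rw [hset, ← card_cross_sym T]
  exact bern_allFalse _ p

end CRec

lemma bern_AT (p : ℝ) {n : ℕ} (v : Fin n) (T : Finset (Fin n)) (hv : v ∈ T)
    {c : ℕ} (hc : Fintype.card {a : Fin n // a ∈ T} = c + 1) :
    bernoulliPr p {η : Sym2 (Fin n) → Bool | ∀ u ∈ T, ReflTransGen (rT T η) v u}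
      = Cf p c := by
  classical
  set eT : {a : Fin n // a ∈ T} ≃ Fin (c + 1) := Fintype.equivFinOfCardEq hc with heT
  have hf : Function.Bijective
      (fun z : Sym2 {a : Fin n // a ∈ T} =>
        (⟨Sym2.map Subtype.val z, fun x hx => by
          induction z using Sym2.ind with
          | _ a b =>
            rw [Sym2.map_pair_eq] at hx
            rcases Sym2.mem_iff.mp hx with rfl | rfl
            · exact a.2
            · exact b.2⟩ :
          {q : Sym2 (Fin n) // ∀ x ∈ q, x ∈ T})) := by
    constructor
    · intro z z' h
      have h2 : Sym2.map Subtype.val z = Sym2.map Subtype.val z' := Subtype.ext_iff.mp h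
      induction z using Sym2.ind with
      | _ a b =>
        induction z' using Sym2.ind with
        | _ a' b' =>
          rw [Sym2.map_pair_eq, Sym2.map_pair_eq] at h2
          rcases Sym2.eq_iff.mp h2 with ⟨h1, h3⟩ | ⟨h1, h3⟩
          · rw [Subtype.ext h1, Subtype.ext h3]
          · rw [Subtype.ext h1, Subtype.ext h3, Sym2.eq_swap]
    · rintro ⟨q, hq⟩
      induction q using Sym2.ind with
      | _ a b =>
        refine ⟨s(⟨a, hq a (Sym2.mem_mk_left a b)⟩, ⟨b, hq b (Sym2.mem_mk_right a b)⟩), ?_⟩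
        exact Subtype.ext (by simp [Sym2.map_pair_eq])
  set ε : {q : Sym2 (Fin n) // ∀ x ∈ q, x ∈ T} ≃ Sym2 (Fin (c + 1)) :=
    (Equiv.ofBijective _ hf).symm.trans (sym2Congr eT) with hε
  have hεsymm : ∀ a' b' : Fin (c + 1),
      (ε.symm s(a', b')).1 = s((eT.symm a').1, (eT.symm b').1) := by
    intro a' b'
    show (Sym2.map Subtype.val (Sym2.map eT.symm s(a', b'))) = _
    rw [Sym2.map_pair_eq, Sym2.map_pair_eq]
  have hset : {η : Sym2 (Fin n) → Bool | ∀ u ∈ T, ReflTransGen (rT T η) v u}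
      = {η | (fun q' => η (ε.symm q').1) ∈
          {θ : Sym2 (Fin (c + 1)) → Bool | (graphOf θ).Connected}} := by
    ext η
    simp only [Set.mem_setOf_eq]
    rw [connected_iff_reach (eT ⟨v, hv⟩)]
    set θ : Sym2 (Fin (c + 1)) → Bool := fun q' => η (ε.symm q').1 with hθ
    set rsub : {a : Fin n // a ∈ T} → {a : Fin n // a ∈ T} → Prop :=
      fun x y => x ≠ y ∧ η s(x.1, y.1) = true with hrsub
    have stepA : ∀ u (hu : u ∈ T),
        ReflTransGen (rT T η) v u ↔ ReflTransGen rsub ⟨v, hv⟩ ⟨u, hu⟩ := by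
      intro u hu
      constructor
      · intro hr
        have aux : ∀ w, ReflTransGen (rT T η) v w →
            ∀ hw : w ∈ T, ReflTransGen rsub ⟨v, hv⟩ ⟨w, hw⟩ := by
          intro w hr2
          induction hr2 with
          | refl => intro hw; exact ReflTransGen.refl
          | tail h step ih =>
            intro hw
            exact (ih step.1.1).tail
              ⟨fun hxy => step.2.1 (congrArg Subtype.val hxy), step.2.2⟩
        exact aux u hr hu
      · intro hr
        exact hr.lift Subtype.val fun x y hxy =>
          ⟨⟨x.2, y.2⟩, fun h => hxy.1 (Subtype.ext h), hxy.2⟩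
    have stepB : ∀ (x y : {a : Fin n // a ∈ T}),
        ReflTransGen rsub x y ↔
          ReflTransGen (fun a b => a ≠ b ∧ θ s(a, b) = true) (eT x) (eT y) := by
      intro x y
      refine rtg_congr eT (fun a b => ?_) x y
      have hθab : θ s(eT a, eT b) = η s(a.1, b.1) := by
        rw [hθ]
        show η (ε.symm s(eT a, eT b)).1 = η s(a.1, b.1)
        rw [hεsymm]
        simp
      constructor
      · rintro ⟨hne, hη⟩
        exact ⟨fun h => hne (eT.injective h), by rw [hθab]; exact hη⟩
      · rintro ⟨hne, hη⟩
        exact ⟨fun h => hne (congrArg eT h), by rw [hθab] at hη; exact hη⟩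
    constructor
    · intro h u'
      have hu : (eT.symm u').1 ∈ T := (eT.symm u').2
      have h1 := (stepA _ hu).mp (h _ hu)
      have h2 := (stepB ⟨v, hv⟩ (eT.symm u')).mp h1
      rw [eT.apply_symm_apply] at h2
      exact h2
    · intro h u hu
      refine (stepA u hu).mpr ?_
      refine (stepB ⟨v, hv⟩ ⟨u, hu⟩).mpr ?_
      exact h (eT ⟨u, hu⟩)
  rw [hset, bern_restrict _ p ε]
  rfl

lemma bern_ET_term (p : ℝ) {n : ℕ} (v : Fin n) (T : Finset (Fin n)) (hv : v ∈ T) :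
    bernoulliPr p {η : Sym2 (Fin n) → Bool |
        ∀ u, ReflTransGen (fun a b => a ≠ b ∧ η s(a, b) = true) v u ↔ u ∈ T}
      = Cf p (T.card - 1) * (1 - p) ^ (T.card * (n - T.card)) := by
  classical
  have hpos : 1 ≤ T.card := Finset.card_pos.mpr ⟨v, hv⟩
  have hc : Fintype.card {a : Fin n // a ∈ T} = (T.card - 1) + 1 := by
    rw [Fintype.card_coe]
    omega
  rw [ET_eq v T hv,
    bern_inter (fun q : Sym2 (Fin n) => ∀ x ∈ q, x ∈ T) p
      (AT_depOn v T) (BT_depOn T),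
    bern_AT p v T hv hc, bern_BT T p]

lemma rec_C (p : ℝ) (n : ℕ) (v : Fin n) :
    ∑ T ∈ Finset.univ.filter (fun T : Finset (Fin n) => v ∈ T),
      Cf p (T.card - 1) * (1 - p) ^ (T.card * (n - T.card)) = 1 := by
  classical
  have hpart := bern_partition (E := Sym2 (Fin n)) p
    (fun η => Finset.univ.filter
      (fun u => ReflTransGen (fun a b => a ≠ b ∧ η s(a, b) = true) v u))
  have hset : ∀ T : Finset (Fin n),
      {η : Sym2 (Fin n) → Bool | (Finset.univ.filter
          fun u => ReflTransGen (fun a b => a ≠ b ∧ η s(a, b) = true) v u) = T}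
        = {η | ∀ u, ReflTransGen (fun a b => a ≠ b ∧ η s(a, b) = true) v u ↔ u ∈ T} := by
    intro T
    ext η
    simp [Finset.ext_iff]
  calc ∑ T ∈ Finset.univ.filter (fun T : Finset (Fin n) => v ∈ T),
        Cf p (T.card - 1) * (1 - p) ^ (T.card * (n - T.card))
      = ∑ T ∈ Finset.univ.filter (fun T : Finset (Fin n) => v ∈ T),
          bernoulliPr p {η : Sym2 (Fin n) → Bool |
            ∀ u, ReflTransGen (fun a b => a ≠ b ∧ η s(a, b) = true) v u ↔ u ∈ T} := by
        refine Finset.sum_congr rfl fun T hT => ?_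
        rw [bern_ET_term p v T (Finset.mem_filter.mp hT).2]
    _ = ∑ T : Finset (Fin n),
          bernoulliPr p {η : Sym2 (Fin n) → Bool |
            ∀ u, ReflTransGen (fun a b => a ≠ b ∧ η s(a, b) = true) v u ↔ u ∈ T} := by
        refine Finset.sum_subset (Finset.filter_subset _ _) fun T _ hT => ?_
        have hv : v ∉ T := by
          intro hc
          exact hT (Finset.mem_filter.mpr ⟨Finset.mem_univ _, hc⟩)
        rw [ET_empty v T hv, bern_empty]
    _ = 1 := by
        rw [← hpart]
        exact Finset.sum_congr rfl fun T _ => by rw [hset T]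

end Stmt5

namespace Stmt5

lemma Rf_eq_Cf (p : ℝ) : ∀ m, Rf p m = Cf p m := by
  intro m
  induction m using Nat.strong_induction_on with
  | _ m ih =>
    classical
    have hR := rec_R p (m + 1) 0
    have hC := rec_C p (m + 1) 0
    set Φ : Finset (Finset (Fin (m + 1))) :=
      Finset.univ.filter (fun S => (0 : Fin (m + 1)) ∈ S) with hΦ
    have huniv : (Finset.univ : Finset (Fin (m + 1))) ∈ Φ := by simp [hΦ]
    rw [← Finset.add_sum_erase Φ _ huniv] at hR hC
    have hcard : (Finset.univ : Finset (Fin (m + 1))).card = m + 1 := by simp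
    rw [hcard] at hR hC
    simp only [Nat.add_sub_cancel, Nat.sub_self, Nat.mul_zero, pow_zero, mul_one] at hR hC
    have htail : ∑ S ∈ Φ.erase Finset.univ,
          Rf p (S.card - 1) * (1 - p) ^ (S.card * (m + 1 - S.card))
        = ∑ S ∈ Φ.erase Finset.univ,
          Cf p (S.card - 1) * (1 - p) ^ (S.card * (m + 1 - S.card)) := by
      refine Finset.sum_congr rfl fun S hS => ?_
      have hne : S ≠ Finset.univ := (Finset.mem_erase.mp hS).1
      have hmem : (0 : Fin (m + 1)) ∈ S :=
        (Finset.mem_filter.mp (Finset.mem_erase.mp hS).2).2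
      have hlt : S.card < m + 1 := by
        have h1 := Finset.card_lt_card (Finset.ssubset_univ_iff.mpr hne)
        rwa [Finset.card_univ, Fintype.card_fin] at h1
      have hpos : 1 ≤ S.card := Finset.card_pos.mpr ⟨0, hmem⟩
      rw [ih (S.card - 1) (by omega)]
    rw [htail] at hR
    linarith

end Stmt5


/-- In `D_{n,p}` the probability that every vertex can be
reached from a fixed vertex `v` equals the probability that `G_{n,p}` is
connected. -/
theorem reachAll_prob_eq_connected_prob (n : ℕ) (hn : 1 ≤ n) (p : ℝ)
    (hp0 : 0 ≤ p) (hp1 : p ≤ 1) (v : Fin n) :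
    bernoulliPr p {ω : Fin n × Fin n → Bool | ∀ u : Fin n, dreach ω v u} =
      bernoulliPr p {η : Sym2 (Fin n) → Bool | (graphOf η).Connected} := by
  obtain ⟨m, rfl⟩ : ∃ m, n = m + 1 := ⟨n - 1, by omega⟩
  have h1 : bernoulliPr p {ω : Fin (m + 1) × Fin (m + 1) → Bool | ∀ u, dreach ω v u}
      = Stmt5.Rf p m := by
    have h := Stmt5.bern_reach_relabel p (Equiv.swap v (0 : Fin (m + 1))) v
    rw [Equiv.swap_apply_left] at h
    exact h
  have h2 : bernoulliPr p {η : Sym2 (Fin (m + 1)) → Bool | (graphOf η).Connected}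
      = Stmt5.Cf p m := rfl
  rw [h1, h2, Stmt5.Rf_eq_Cf]
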